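/- Let p be a prime with 2n < p. If a sequence a_0 = -1/2, a_1, ..., a_n in F_p satisfies a_{k+1} = Σ_{i=1}^{k} a_i a_{k+1-i} for all 1 ≤ k ≤ n-1, then a_k = C_{k-1}·a_1^k for all 1 ≤ k ≤ n, where C_j denotes the j-th Catalan number (reduced mod p). -/

import Mathlib

lemma catalan_sum_Icc (m : ℕ) :
    ∑ i ∈ Finset.Icc 1 (m + 1), catalan (i - 1) * catalan (m + 1 - i) = catalan (m + 1) := by
  rw [catalan_succ']
  rw [Finset.Nat.sum_antidiagonal_eq_sum_range_succ (fun i j => catalan i * catalan j)]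
  apply Finset.sum_nbij' (fun i => i - 1) (fun j => j + 1)
  · intro i hi; simp at hi ⊢; omega
  · intro j hj; simp at hj ⊢; omega
  · intro i hi; simp at hi; omega
  · intro j hj; simp
  · intro i hi; simp at hi
    congr 2
    omega

/-- If `a 0 = -1/2` and `a (k+1) = ∑_{i=1}^k a i * a (k+1-i)` for `1 ≤ k ≤ n-1`,
then `a k = C_{k-1} * (a 1)^k` for `1 ≤ k ≤ n`, where `C_j` is the `j`-th Catalan
number. -/
theorem stmt_4 (p : ℕ) [Fact p.Prime] (n : ℕ) (hnp : 2 * n < p)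
    (a : ℕ → ZMod p) (h0 : a 0 = -(2 : ZMod p)⁻¹)
    (hrec : ∀ k : ℕ, 1 ≤ k → k ≤ n - 1 →
      a (k + 1) = ∑ i ∈ Finset.Icc 1 k, a i * a (k + 1 - i)) :
    ∀ k : ℕ, 1 ≤ k → k ≤ n → a k = (catalan (k - 1) : ZMod p) * (a 1) ^ k := by
  intro k
  induction k using Nat.strong_induction_on with
  | _ k ih =>
    intro hk1 hkn
    match k, hk1 with
    | 1, _ => simp
    | (m+2), _ =>
      rw [show m + 2 = (m + 1) + 1 by rfl, hrec (m+1) (by omega) (by omega)]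
      have key : ∀ i ∈ Finset.Icc 1 (m+1), a i * a (m + 1 + 1 - i) =
          ((catalan (i-1) * catalan (m+1-i) : ℕ) : ZMod p) * (a 1)^(m+2) := by
        intro i hi
        simp only [Finset.mem_Icc] at hi
        rw [ih i (by omega) (by omega) (by omega),
            ih (m + 1 + 1 - i) (by omega) (by omega) (by omega)]
        have h1 : m + 1 + 1 - i - 1 = m + 1 - i := by omega
        have h2 : i + (m + 1 + 1 - i) = m + 2 := by omega
        rw [h1]
        push_cast
        rw [mul_mul_mul_comm, ← pow_add, h2]
      rw [Finset.sum_congr rfl key, ← Finset.sum_mul, ← Nat.cast_sum, catalan_sum_Icc]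
      norm_num
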